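/- Let G be a free group on generators a, b, c, and for each integer i let b_i = b^{c^i}. For each finitely supported function f : ℤ → ℤ define b_f as the product of the b_i^{f(i)} (in increasing order of i) and a_f = b_f^{-1} a b_f. Then the elements {a_f : f ∈ 𝓔} freely generate a free subgroup of G, where 𝓔 is the set of all finitely supported functions ℤ → ℤ. -/

import Mathlib

namespace Stmt1

/-- The free group on three generators `a, b, c`. -/
abbrev G := FreeGroup (Fin 3)

def a : G := FreeGroup.of 0
def b : G := FreeGroup.of 1
def c : G := FreeGroup.of 2

/-- `b_i = c^{-i} b c^i = b^{c^i}`. -/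
def bi (i : ℤ) : G := c ^ (-i) * b * c ^ i

/-- For a finitely supported `f : ℤ → ℤ`, `b_f` is the product of the `b_i^{f(i)}`
in increasing order of `i`. -/
def bf (f : ℤ →₀ ℤ) : G := ((f.support.sort (· ≤ ·)).map fun i => bi i ^ f i).prod

/-- `a_f = b_f⁻¹ a b_f`. -/
def af (f : ℤ →₀ ℤ) : G := (bf f)⁻¹ * a * bf f

/-! ### Auxiliary material -/

open Multiplicative SemidirectProduct

theorem inr_mul_inl' {N H : Type*} [Group N] [Group H] {φ : H →* MulAut N} (g : H) (n : N) :
    (SemidirectProduct.inr g : N ⋊[φ] H) * SemidirectProduct.inl n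
      = SemidirectProduct.inl (φ g n) * SemidirectProduct.inr g := by
  ext <;> simp

/-! #### Injectivity of `bf` -/

/-- The shift action of `ℤ` on `Multiplicative (ℤ →₀ ℤ)`. -/
noncomputable def ψ : Multiplicative ℤ →* MulAut (Multiplicative (ℤ →₀ ℤ)) :=
  MonoidHom.mk' (fun j => AddEquiv.toMultiplicative
      (Finsupp.domCongr (Equiv.addRight (-Multiplicative.toAdd j)))) (by
    intro g h
    ext x
    simp only [AddEquiv.toMultiplicative_apply_apply, MulAut.mul_apply, toAdd_ofAdd,
      AddMonoidHom.toMultiplicative_apply_apply, AddEquiv.coe_toAddMonoidHom,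
      Finsupp.domCongr_apply, EmbeddingLike.apply_eq_iff_eq]
    rw [← Finsupp.equivMapDomain_trans]
    congr 1
    ext y
    simp [Equiv.addRight]; ring)

theorem ψ_single (j : Multiplicative ℤ) (m n : ℤ) :
    ψ j (ofAdd (Finsupp.single m n)) = ofAdd (Finsupp.single (m - j.toAdd) n) := by
  rw [ψ]
  simp only [MonoidHom.mk'_apply, AddEquiv.toMultiplicative_apply_apply,
    AddMonoidHom.toMultiplicative_apply_apply, AddEquiv.coe_toAddMonoidHom, toAdd_ofAdd,
    Finsupp.domCongr_apply, Finsupp.equivMapDomain_single, Equiv.coe_addRight]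
  rw [sub_eq_add_neg]

/-- The "labelled abelianization" homomorphism used to read off `f` from `bf f`. -/
noncomputable def ρ : G →* Multiplicative (ℤ →₀ ℤ) ⋊[ψ] Multiplicative ℤ :=
  FreeGroup.lift ![1, SemidirectProduct.inl (ofAdd (Finsupp.single 0 1)),
    SemidirectProduct.inr (ofAdd 1)]

theorem ρ_b : ρ b = SemidirectProduct.inl (ofAdd (Finsupp.single 0 1)) := by
  rw [ρ, b, FreeGroup.lift_apply_of]; rfl

theorem ρ_c : ρ c = SemidirectProduct.inr (ofAdd 1) := by
  rw [ρ, c, FreeGroup.lift_apply_of]; rfl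

theorem ρ_c_zpow (i : ℤ) : ρ (c ^ i) = SemidirectProduct.inr (ofAdd i) := by
  rw [map_zpow, ρ_c, ← map_zpow, ← ofAdd_zsmul, smul_eq_mul, mul_one]

theorem ρ_bi (i : ℤ) : ρ (bi i) = SemidirectProduct.inl (ofAdd (Finsupp.single i 1)) := by
  rw [bi, map_mul, map_mul, ρ_b, ρ_c_zpow, ρ_c_zpow, inr_mul_inl', ψ_single, mul_assoc,
    ← map_mul, ← ofAdd_add, neg_add_cancel, ofAdd_zero, map_one, mul_one, toAdd_ofAdd]
  rw [zero_sub, neg_neg]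

theorem ρ_bi_zpow (i n : ℤ) :
    ρ (bi i ^ n) = SemidirectProduct.inl (ofAdd (Finsupp.single i n)) := by
  rw [map_zpow, ρ_bi, ← map_zpow, ← ofAdd_zsmul, Finsupp.smul_single, smul_eq_mul, mul_one]

theorem ρ_bf (f : ℤ →₀ ℤ) : ρ (bf f) = SemidirectProduct.inl (ofAdd f) := by
  rw [bf, map_list_prod, List.map_map]
  have h1 : List.map (⇑ρ ∘ fun i => bi i ^ f i) (f.support.sort (· ≤ ·))
      = List.map (fun i => (SemidirectProduct.inl (ofAdd (Finsupp.single i (f i)))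
          : Multiplicative (ℤ →₀ ℤ) ⋊[ψ] Multiplicative ℤ)) (f.support.sort (· ≤ ·)) := by
    apply List.map_congr_left
    intro i _
    exact ρ_bi_zpow i (f i)
  rw [h1]
  have h2 : (fun i => (SemidirectProduct.inl (ofAdd (Finsupp.single i (f i)))
        : Multiplicative (ℤ →₀ ℤ) ⋊[ψ] Multiplicative ℤ))
      = ⇑(SemidirectProduct.inl : Multiplicative (ℤ →₀ ℤ) →* _ ⋊[ψ] Multiplicative ℤ)
          ∘ ⇑(ofAdd) ∘ fun i => Finsupp.single i (f i) := rfl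
  rw [h2, ← List.map_map, ← map_list_prod, ← List.map_map, ← ofAdd_list_prod]
  have h3 : ((f.support.sort (· ≤ ·)).map fun i => Finsupp.single i (f i)).sum
      = f.support.sum fun i => Finsupp.single i (f i) := by
    rw [Finset.sum_eq_multiset_sum, ← Finset.sort_eq (s := f.support) (r := (· ≤ ·))]
    rfl
  have h4 : (∑ i ∈ f.support, Finsupp.single i (f i)) = f := Finsupp.sum_single f
  rw [h3, h4]

theorem bf_injective : Function.Injective bf := by
  intro f g h
  have h2 := congrArg ρ h
  rw [ρ_bf, ρ_bf] at h2
  exact ofAdd.injective (SemidirectProduct.inl_injective h2)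

theorem map_bf_injective : Function.Injective ⇑(FreeGroup.map bf : FreeGroup (ℤ →₀ ℤ) →* FreeGroup G) := by
  obtain ⟨σ, hσ⟩ := bf_injective.hasLeftInverse
  intro x y h
  have key : ∀ z : FreeGroup (ℤ →₀ ℤ), FreeGroup.map σ (FreeGroup.map bf z) = z := by
    intro z
    rw [FreeGroup.map.comp]
    have : σ ∘ bf = id := funext hσ
    rw [this, FreeGroup.map.id]
  rw [← key x, ← key y, h]

/-! #### The semidirect-product retraction argument -/

/-- Kill `a`. -/
def π : G →* G := FreeGroup.lift ![1, b, c]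

theorem π_a : π a = 1 := by rw [π, a, FreeGroup.lift_apply_of]; rfl
theorem π_b : π b = b := by rw [π, b, FreeGroup.lift_apply_of]; rfl
theorem π_c : π c = c := by rw [π, c, FreeGroup.lift_apply_of]; rfl

theorem π_bi (i : ℤ) : π (bi i) = bi i := by
  rw [bi, map_mul, map_mul, map_zpow, map_zpow, π_b, π_c]

theorem π_bf (f : ℤ →₀ ℤ) : π (bf f) = bf f := by
  rw [bf, map_list_prod, List.map_map]
  apply congrArg List.prod
  apply List.map_congr_left
  intro i _
  simp only [Function.comp_apply, map_zpow, π_bi]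

theorem π_af (f : ℤ →₀ ℤ) : π (af f) = 1 := by
  rw [af, map_mul, map_mul, map_inv, π_a, π_bf, mul_one, inv_mul_cancel]

abbrev K := FreeGroup G

/-- `G` acts on `K = FreeGroup G` by right multiplication (through `π`) on the generators. -/
def φ0 : G →* MulAut K :=
  MonoidHom.mk' (fun g => FreeGroup.freeGroupCongr (Equiv.mulRight g⁻¹)) (by
    intro g h
    rw [MulAut.mul_def, FreeGroup.freeGroupCongr_trans]
    apply congrArg FreeGroup.freeGroupCongr
    ext x
    simp [mul_assoc])

def φ : G →* MulAut K := φ0.comp π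

theorem φ_of (g : G) (w : G) : φ g (FreeGroup.of w) = FreeGroup.of (w * (π g)⁻¹) := rfl

theorem φ_lift_af (x : FreeGroup (ℤ →₀ ℤ)) : φ (FreeGroup.lift af x) = 1 := by
  have h : π.comp (FreeGroup.lift af) = 1 := by
    apply FreeGroup.ext_hom
    intro f
    simp [π_af]
  have h2 : π (FreeGroup.lift af x) = 1 := by
    simpa using DFunLike.congr_fun h x
  rw [φ, MonoidHom.comp_apply, h2, map_one]

noncomputable def Ψ : G →* K ⋊[φ] G :=
  FreeGroup.lift ![SemidirectProduct.inl (FreeGroup.of (1 : G)) * SemidirectProduct.inr a,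
    SemidirectProduct.inr b, SemidirectProduct.inr c]

theorem Ψ_a : Ψ a = SemidirectProduct.inl (FreeGroup.of (1 : G)) * SemidirectProduct.inr a := by
  rw [Ψ, a, FreeGroup.lift_apply_of]; rfl
theorem Ψ_b : Ψ b = SemidirectProduct.inr b := by rw [Ψ, b, FreeGroup.lift_apply_of]; rfl
theorem Ψ_c : Ψ c = SemidirectProduct.inr c := by rw [Ψ, c, FreeGroup.lift_apply_of]; rfl

theorem Ψ_bf (f : ℤ →₀ ℤ) : Ψ (bf f) = SemidirectProduct.inr (bf f) := by
  rw [bf, map_list_prod, map_list_prod, List.map_map, List.map_map]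
  congr 1
  apply List.map_congr_left
  intro i _
  simp only [Function.comp_apply, map_zpow, bi, map_mul, Ψ_b, Ψ_c]

theorem Ψ_af (f : ℤ →₀ ℤ) :
    Ψ (af f) = SemidirectProduct.inl (FreeGroup.of (bf f)) * SemidirectProduct.inr (af f) := by
  rw [af, map_mul, map_mul, map_inv, Ψ_bf, Ψ_a, ← map_inv]
  rw [mul_assoc, mul_assoc, ← map_mul, ← mul_assoc, inr_mul_inl', φ_of, map_inv, π_bf,
    one_mul, inv_inv, mul_assoc, ← map_mul, ← mul_assoc]

/-- The interesting homomorphism recording both the letters used and the image. -/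
noncomputable def θ : FreeGroup (ℤ →₀ ℤ) →* K ⋊[φ] G :=
  FreeGroup.lift fun f =>
    SemidirectProduct.inl (FreeGroup.of (bf f)) * SemidirectProduct.inr (af f)

theorem θ_eq : θ = Ψ.comp (FreeGroup.lift af) := by
  apply FreeGroup.ext_hom
  intro f
  simp only [θ, FreeGroup.lift_apply_of, MonoidHom.comp_apply, Ψ_af]

theorem inr_lift_af_comm (y : FreeGroup (ℤ →₀ ℤ)) (k : K) :
    (SemidirectProduct.inr (FreeGroup.lift af y) : K ⋊[φ] G) * SemidirectProduct.inl k
      = SemidirectProduct.inl k * SemidirectProduct.inr (FreeGroup.lift af y) := by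
  rw [inr_mul_inl', φ_lift_af, MulAut.one_apply]

theorem θ_apply (x : FreeGroup (ℤ →₀ ℤ)) :
    θ x = SemidirectProduct.inl (FreeGroup.map bf x)
      * SemidirectProduct.inr (FreeGroup.lift af x) := by
  induction x using FreeGroup.induction_on with
  | C1 => simp
  | of f =>
    show θ (FreeGroup.of f) = SemidirectProduct.inl (FreeGroup.map bf (FreeGroup.of f))
      * SemidirectProduct.inr (FreeGroup.lift af (FreeGroup.of f))
    rw [θ, FreeGroup.lift_apply_of, FreeGroup.map.of, FreeGroup.lift_apply_of]
  | inv_of f ih =>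
    show θ (FreeGroup.of f)⁻¹ = SemidirectProduct.inl (FreeGroup.map bf (FreeGroup.of f)⁻¹)
      * SemidirectProduct.inr (FreeGroup.lift af (FreeGroup.of f)⁻¹)
    replace ih : θ (FreeGroup.of f) = SemidirectProduct.inl (FreeGroup.map bf (FreeGroup.of f))
      * SemidirectProduct.inr (FreeGroup.lift af (FreeGroup.of f)) := ih
    rw [map_inv, ih, mul_inv_rev, ← map_inv, ← map_inv, ← map_inv, ← map_inv,
      inr_lift_af_comm ((FreeGroup.of f)⁻¹)]
  | mul x y ihx ihy =>
    rw [map_mul, ihx, ihy, map_mul, map_mul, mul_assoc, ← mul_assoc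
      (SemidirectProduct.inr (FreeGroup.lift af x)), inr_lift_af_comm x,
      mul_assoc, ← map_mul, ← mul_assoc, ← map_mul, map_mul (FreeGroup.lift af) x y]

/-- The main theorem. -/
theorem af_freely_generates :
    Function.Injective ((FreeGroup.lift af : FreeGroup (ℤ →₀ ℤ) →* G)) := by
  rw [injective_iff_map_eq_one]
  intro x hx
  have h1 : θ x = 1 := by
    rw [θ_eq, MonoidHom.comp_apply, hx, map_one]
  rw [θ_apply, hx, map_one, mul_one] at h1
  have h2 : FreeGroup.map bf x = 1 := SemidirectProduct.inl_injective (by simpa using h1)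
  exact map_bf_injective (by simpa using h2)

end Stmt1
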